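/- Let G be a group, N ≥ 2 an integer, and s, v ∈ G with s^N = 1, satisfying far-commutation. Let q be a divisor of N with q ≥ 2 and r ≥ 1 an integer, and let F := f_{(q−1)r} ⋯ f_r · f_0. Then F has the space-time symmetry: s^{−r} F s^r = f_0 · f_{(q−1)r} ⋯ f_{2r} · f_r; that is, conjugating the Floquet operator by a translation of r sites yields the same circuit advanced in time by one layer. -/

import Mathlib

/-- The translated gate `v_i := s^{-i} v s^i`. -/
def vgate {G : Type*} [Group G] (s v : G) (i : ℤ) : G := s ^ (-i) * v * s ^ i

/-- The layer `f_m := v_{m+(N/q−1)q} ⋯ v_{m+q} · v_m`. -/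
def layer {G : Type*} [Group G] (s v : G) (N q : ℕ) (m : ℤ) : G :=
  (((List.range (N / q)).reverse).map (fun k => vgate s v (m + (k : ℤ) * (q : ℤ)))).prod

/-- Far-commutation: gates commute unless their site difference is ±1 mod N. -/
def FarCommute {G : Type*} [Group G] (s v : G) (N : ℕ) : Prop :=
  ∀ i j : ℤ, ¬ (i - j ≡ 1 [ZMOD (N : ℤ)]) → ¬ (i - j ≡ -1 [ZMOD (N : ℤ)]) →
    vgate s v i * vgate s v j = vgate s v j * vgate s v i

/-- The Floquet operator `F = f_{(q−1)r} ⋯ f_r · f_0`. -/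
def floquet {G : Type*} [Group G] (s v : G) (N q r : ℕ) : G :=
  (((List.range q).reverse).map (fun j => layer s v N q ((j : ℤ) * (r : ℤ)))).prod

/-- Normalize the elaborated monadic coercion of a `List ℕ` into `List ℤ` under a map. -/
lemma map_cast_list {α : Type*} (f : ℤ → α) (l : List ℕ) :
    (List.map f (do let a ← l; pure ((a : ℕ) : ℤ))) = l.map (fun n : ℕ => f n) := by
  simp only [List.bind_eq_flatMap, List.pure_def, ← List.map_eq_flatMap, List.map_map]
  rfl

lemma layer_eq {G : Type*} [Group G] (s v : G) (N q : ℕ) (m : ℤ) : layer s v N q m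
    = ((List.range (N / q)).reverse.map
        (fun k : ℕ => vgate s v (m + (k : ℤ) * (q : ℤ)))).prod := by
  unfold layer
  rw [map_cast_list]

lemma floquet_eq {G : Type*} [Group G] (s v : G) (N q r : ℕ) : floquet s v N q r
    = ((List.range q).reverse.map
        (fun j : ℕ => layer s v N q ((j : ℤ) * (r : ℤ)))).prod := by
  unfold floquet
  rw [map_cast_list]

lemma vgate_period {G : Type*} [Group G] (s v : G) (N : ℕ) (hs : s ^ N = 1) (i : ℤ) :
    vgate s v (i + N) = vgate s v i := by
  have h1 : s ^ (N : ℤ) = 1 := by rw [zpow_natCast, hs]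
  simp [vgate, zpow_add, neg_add, h1]

lemma vgate_conj {G : Type*} [Group G] (s v : G) (r : ℕ) (i : ℤ) :
    (s ^ r)⁻¹ * vgate s v i * s ^ r = vgate s v (i + r) := by
  have h1 : (s ^ r)⁻¹ = s ^ (-(r:ℤ)) := by rw [← zpow_natCast, zpow_neg]
  have h2 : s ^ r = s ^ ((r:ℤ)) := by rw [zpow_natCast]
  rw [h1, h2]
  simp [vgate, zpow_add, neg_add, mul_assoc]

lemma vgate_comm {G : Type*} [Group G] (s v : G) (N q : ℕ) (hcomm : FarCommute s v N)
    (hq : q ∣ N) (hq2 : 2 ≤ q) (i j c : ℤ) (hc : i - j = c * q) :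
    vgate s v i * vgate s v j = vgate s v j * vgate s v i := by
  have hqN : (q : ℤ) ∣ (N : ℤ) := Int.natCast_dvd_natCast.mpr hq
  apply hcomm
  · intro h
    have hd : (N : ℤ) ∣ 1 - (i - j) := Int.ModEq.dvd h
    have : (q : ℤ) ∣ 1 := by
      have h2 : (q : ℤ) ∣ 1 - c * q := hc ▸ hqN.trans hd
      have h3 : (q : ℤ) ∣ c * q := dvd_mul_left _ _
      have := h2.add h3
      simpa using this
    have := Int.le_of_dvd one_pos this
    omega
  · intro h
    have hd : (N : ℤ) ∣ -1 - (i - j) := Int.ModEq.dvd h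
    have : (q : ℤ) ∣ 1 := by
      have h2 : (q : ℤ) ∣ -1 - c * q := hc ▸ hqN.trans hd
      have h3 : (q : ℤ) ∣ c * q := dvd_mul_left _ _
      have h4 := h2.add h3
      have h5 : (-1 - c * q) + c * q = -1 := by ring
      rw [h5] at h4
      exact (dvd_neg).mp h4
    have := Int.le_of_dvd one_pos this
    omega

lemma conj_list_prod {G : Type*} [Group G] (g : G) (l : List G) :
    g⁻¹ * l.prod * g = (l.map (fun x => g⁻¹ * x * g)).prod := by
  induction l with
  | nil => simp
  | cons a t ih =>
    simp only [List.prod_cons, List.map_cons]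
    rw [← ih]
    group

lemma layer_conj {G : Type*} [Group G] (s v : G) (N q r : ℕ) (m : ℤ) :
    (s ^ r)⁻¹ * layer s v N q m * s ^ r = layer s v N q (m + r) := by
  rw [layer_eq, layer_eq, conj_list_prod, List.map_map]
  congr 1
  apply List.map_congr_left
  intro k _
  simp only [Function.comp_apply]
  rw [vgate_conj]
  congr 1
  ring

lemma rotate_prod {M : Type*} [Monoid M] (g : ℕ → M) (n : ℕ) (hper : g (n + 1) = g 0)
    (hc : ∀ k, Commute (g 0) (g (k + 1))) :
    ((List.range (n + 1)).reverse.map (fun k => g (k + 1))).prod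
      = ((List.range (n + 1)).reverse.map g).prod := by
  have e1 : List.range (n + 1) = List.range n ++ [n] := by
    simp [List.range_succ]
  have e2 : List.range (n + 1) = 0 :: List.map Nat.succ (List.range n) :=
    List.range_succ_eq_map (n := n)
  have hfeq : (fun k => g (k + 1)) = g ∘ Nat.succ := rfl
  conv_lhs => rw [e1]
  conv_rhs => rw [e2]
  rw [List.reverse_append, List.reverse_singleton, List.singleton_append, List.map_cons,
    List.prod_cons, hper, List.reverse_cons, List.map_append, List.map_cons, List.map_nil,
    List.prod_append, List.prod_cons, List.prod_nil, mul_one, hfeq]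
  have hrev : (List.map Nat.succ (List.range n)).reverse
      = List.map Nat.succ (List.range n).reverse := (List.map_reverse).symm
  rw [hrev, List.map_map]
  have hcm : Commute (g 0) ((List.map (g ∘ Nat.succ) (List.range n).reverse).prod) := by
    apply Commute.list_prod_right
    intro x hx
    simp only [List.mem_map, List.mem_reverse, List.mem_range, Function.comp_apply] at hx
    obtain ⟨k, -, rfl⟩ := hx
    exact hc k
  exact hcm.eq

lemma layer_add_q {G : Type*} [Group G] (N : ℕ) (hN : 2 ≤ N) (s v : G) (hs : s ^ N = 1)
    (hcomm : FarCommute s v N) (q : ℕ) (hq : q ∣ N) (hq2 : 2 ≤ q) (m : ℤ) :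
    layer s v N q (m + q) = layer s v N q m := by
  have hqpos : 0 < q := by omega
  have hqle : q ≤ N := Nat.le_of_dvd (by omega) hq
  have hn1 : 1 ≤ N / q := (Nat.one_le_div_iff hqpos).mpr hqle
  obtain ⟨n', hn⟩ : ∃ n', N / q = n' + 1 := ⟨N / q - 1, by omega⟩
  have hNq : ((n' : ℤ) + 1) * q = N := by
    have h := Nat.mul_div_cancel' hq
    rw [hn] at h
    push_cast [← h]
    ring
  set g : ℕ → G := fun k => vgate s v (m + (k : ℤ) * q) with hg
  have hper : g (n' + 1) = g 0 := by
    simp only [hg]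
    have h1 : m + ((n' + 1 : ℕ) : ℤ) * q = (m + ((0 : ℕ) : ℤ) * q) + N := by
      rw [← hNq]; push_cast; ring
    rw [h1, vgate_period s v N hs]
  have hc : ∀ k, Commute (g 0) (g (k + 1)) := by
    intro k
    exact vgate_comm s v N q hcomm hq hq2 _ _ (-((k : ℤ) + 1)) (by push_cast; ring)
  rw [layer_eq, layer_eq, hn]
  have hmapeq : List.map (fun k : ℕ => vgate s v (m + (q : ℤ) + (k : ℤ) * q))
        (List.range (n' + 1)).reverse
      = List.map (fun k : ℕ => g (k + 1)) (List.range (n' + 1)).reverse := by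
    apply List.map_congr_left
    intro k _
    simp only [hg]
    congr 1
    push_cast
    ring
  rw [hmapeq]
  exact rotate_prod g n' hper hc

lemma layer_nat_mul {G : Type*} [Group G] (N : ℕ) (hN : 2 ≤ N) (s v : G) (hs : s ^ N = 1)
    (hcomm : FarCommute s v N) (q : ℕ) (hq : q ∣ N) (hq2 : 2 ≤ q) (t : ℕ) :
    layer s v N q ((t : ℤ) * q) = layer s v N q 0 := by
  induction t with
  | zero => norm_num
  | succ t ih =>
    have h : ((t + 1 : ℕ) : ℤ) * q = ((t : ℤ) * q) + q := by push_cast; ring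
    rw [h, layer_add_q N hN s v hs hcomm q hq hq2, ih]

/-- Space-time symmetry: conjugating the Floquet operator
`F = f_{(q−1)r} ⋯ f_r · f_0` by a translation of `r` sites yields the same circuit
advanced in time by one layer: `s^{−r} F s^r = f_0 · f_{(q−1)r} ⋯ f_{2r} · f_r`. -/
theorem floquet_spacetime_symmetry {G : Type*} [Group G] (N : ℕ) (hN : 2 ≤ N)
    (s v : G) (hs : s ^ N = 1) (hcomm : FarCommute s v N)
    (q : ℕ) (hq : q ∣ N) (hq2 : 2 ≤ q) (r : ℕ) (hr : 1 ≤ r) :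
    (s ^ r)⁻¹ * floquet s v N q r * s ^ r =
      layer s v N q 0 *
        (((List.range (q - 1)).reverse).map
          (fun j => layer s v N q (((j : ℤ) + 1) * (r : ℤ)))).prod := by
  rw [floquet_eq, conj_list_prod, List.map_map, map_cast_list]
  have hstep : ((fun x => (s ^ r)⁻¹ * x * s ^ r) ∘ fun j : ℕ => layer s v N q ((j : ℤ) * r))
      = fun j : ℕ => layer s v N q ((j : ℤ) * r + r) := by
    funext j
    exact layer_conj s v N q r _
  rw [hstep]
  obtain ⟨q', hq'⟩ : ∃ q', q = q' + 1 := ⟨q - 1, by omega⟩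
  subst hq'
  have e1 : List.range (q' + 1) = List.range q' ++ [q'] := by simp [List.range_succ]
  rw [e1, List.reverse_append, List.reverse_singleton, List.singleton_append, List.map_cons,
    List.prod_cons]
  have hhead : layer s v N (q' + 1) ((q' : ℤ) * r + r) = layer s v N (q' + 1) 0 := by
    have h : ((q' : ℤ)) * r + r = ((r : ℕ) : ℤ) * ((q' + 1 : ℕ) : ℤ) := by push_cast; ring
    rw [h]
    exact layer_nat_mul N hN s v hs hcomm (q' + 1) hq hq2 r
  rw [hhead]
  congr 1
  have h2 : q' + 1 - 1 = q' := by omega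
  rw [h2]
  congr 1
  apply List.map_congr_left
  intro j _
  congr 1
  push_cast
  ring
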